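/- For every X ∈ F, ‖D(X)‖_F² ≤ N(X) + (1/2) M₁² n³. -/

import Mathlib

set_option autoImplicit false

open Matrix Set Filter

attribute [local instance] Matrix.normedAddCommGroup Matrix.normedSpace

namespace BoxSDP

open scoped Classical

/-- Trace inner product `⟨A|B⟩ = Trace(Aᵀ B)`. -/
noncomputable def mip {m k : Type*} [Fintype m] [Fintype k]
    (A B : Matrix m k ℝ) : ℝ :=
  (Aᵀ * B).trace

/-- Frobenius norm `‖A‖_F = √⟨A|A⟩`. -/
noncomputable def fnorm {m k : Type*} [Fintype m] [Fintype k]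
    (A : Matrix m k ℝ) : ℝ :=
  Real.sqrt (mip A A)

/-- The feasible set `F = {X : O ⪯ X ⪯ I}` (membership forces symmetry). -/
def Feas (n : ℕ) : Set (Matrix (Fin n) (Fin n) ℝ) :=
  {X | X.PosSemidef ∧ (1 - X).PosSemidef}

/-- Square root of a positive semidefinite matrix (junk value `0` otherwise);
agrees with `A^{1/2} = Q K^{1/2} Qᵀ` on positive semidefinite matrices. -/
noncomputable def psqrt {m : Type*} [Fintype m] [DecidableEq m]
    (A : Matrix m m ℝ) : Matrix m m ℝ :=
  if h : A.PosSemidef then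
    (h.1.eigenvectorUnitary : Matrix m m ℝ) * diagonal (Real.sqrt ∘ h.1.eigenvalues) *
      (star h.1.eigenvectorUnitary : Matrix m m ℝ)
  else 0

/-- Fourth root `A^{1/4}` of a positive semidefinite matrix. -/
noncomputable def proot4 {m : Type*} [Fintype m] [DecidableEq m]
    (A : Matrix m m ℝ) : Matrix m m ℝ :=
  psqrt (psqrt A)

/-- The 2-norm of a symmetric matrix: its largest absolute eigenvalue. -/
noncomputable def norm2 {m : Type*} [Fintype m] [DecidableEq m]
    (A : Matrix m m ℝ) : ℝ :=
  if h : A.IsHermitian then sSup (Set.range fun i => |h.eigenvalues i|) else 0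

/-- The linear functional `H ↦ ⟨G|H⟩`, as a continuous linear map; a function
`f` has gradient matrix `G` at `X` iff `HasFDerivAt f (gradCLM G) X`. -/
noncomputable def gradCLM {n : ℕ} (G : Matrix (Fin n) (Fin n) ℝ) :
    Matrix (Fin n) (Fin n) ℝ →L[ℝ] ℝ :=
  LinearMap.toContinuousLinearMap
    { toFun := fun H => mip G H
      map_add' := fun x y => by
        simp [mip, Matrix.mul_add]
      map_smul' := fun c x => by
        simp [mip, Matrix.mul_smul] }

/-- The Hessian bilinear form `⟨A | ∇²f(X) | B⟩` induced by the derivative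
`hessOp` of the gradient map. -/
noncomputable def hform {n : ℕ}
    (hessOp : Matrix (Fin n) (Fin n) ℝ →L[ℝ] Matrix (Fin n) (Fin n) ℝ)
    (A B : Matrix (Fin n) (Fin n) ℝ) : ℝ :=
  mip A (hessOp B)

/-- `underline-f`: the minimum of `⟨G | Y − X̂⟩` over `Y ∈ F`. -/
noncomputable def underf {n : ℕ} (G Xh : Matrix (Fin n) (Fin n) ℝ) : ℝ :=
  sInf ((fun Y => mip G (Y - Xh)) '' Feas n)

/-- First-order optimality condition at `Xs` for gradient matrix `G`. -/
def FirstOrderOpt {n : ℕ} (G Xs : Matrix (Fin n) (Fin n) ℝ) : Prop :=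
  ∀ X ∈ Feas n, 0 ≤ mip G (X - Xs)

/-- A fixed eigenvalue decomposition `G = P Γ Pᵀ` of a symmetric matrix `G`,
with eigenvalues in descending order, split into the block `Pp, gp` of
positive eigenvalues and the block `Pm, gm` of nonpositive eigenvalues. -/
structure SpecDecomp (n : ℕ) (G : Matrix (Fin n) (Fin n) ℝ) where
  np : ℕ
  nm : ℕ
  hdim : np + nm = n
  Pp : Matrix (Fin n) (Fin np) ℝ
  Pm : Matrix (Fin n) (Fin nm) ℝ
  gp : Fin np → ℝ
  gm : Fin nm → ℝ
  hgp_pos : ∀ i, 0 < gp i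
  hgm_nonpos : ∀ j, gm j ≤ 0
  hgp_anti : ∀ i j : Fin np, i ≤ j → gp j ≤ gp i
  hgm_anti : ∀ i j : Fin nm, i ≤ j → gm j ≤ gm i
  hPp_orth : Ppᵀ * Pp = 1
  hPm_orth : Pmᵀ * Pm = 1
  hPpPm : Ppᵀ * Pm = 0
  hPPT : Pp * Ppᵀ + Pm * Pmᵀ = 1
  hG : G = Pp * Matrix.diagonal gp * Ppᵀ + Pm * Matrix.diagonal gm * Pmᵀ

namespace SpecDecomp

variable {n : ℕ} {G : Matrix (Fin n) (Fin n) ℝ}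

/-- `V₊(X) = P₊ᵀ X P₊`. -/
def Vp (sd : SpecDecomp n G) (X : Matrix (Fin n) (Fin n) ℝ) :
    Matrix (Fin sd.np) (Fin sd.np) ℝ :=
  sd.Ppᵀ * X * sd.Pp

/-- `V₋(X) = P₋ᵀ (I − X) P₋`. -/
def Vm (sd : SpecDecomp n G) (X : Matrix (Fin n) (Fin n) ℝ) :
    Matrix (Fin sd.nm) (Fin sd.nm) ℝ :=
  sd.Pmᵀ * (1 - X) * sd.Pm

/-- The search direction `D(X) = P M Pᵀ` with blocks
`M₁₁ = V₊^{1/2} Γ₊ V₊^{1/2}`, `M₁₂ = γ_max P₊ᵀ X P₋`,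
`M₂₁ = γ_max P₋ᵀ X P₊`, `M₂₂ = V₋^{1/2} Γ₋ V₋^{1/2}`. -/
noncomputable def Dmat (sd : SpecDecomp n G) (X : Matrix (Fin n) (Fin n) ℝ) :
    Matrix (Fin n) (Fin n) ℝ :=
  sd.Pp * (psqrt (sd.Vp X) * Matrix.diagonal sd.gp * psqrt (sd.Vp X)) * sd.Ppᵀ
    + norm2 G • (sd.Pp * (sd.Ppᵀ * X * sd.Pm) * sd.Pmᵀ)
    + norm2 G • (sd.Pm * (sd.Pmᵀ * X * sd.Pp) * sd.Ppᵀ)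
    + sd.Pm * (psqrt (sd.Vm X) * Matrix.diagonal sd.gm * psqrt (sd.Vm X)) * sd.Pmᵀ

/-- `N(X) = ⟨G | D(X)⟩`. -/
noncomputable def Nval (sd : SpecDecomp n G) (X : Matrix (Fin n) (Fin n) ℝ) : ℝ :=
  mip G (sd.Dmat X)

end SpecDecomp


section Helpers

variable {m : Type*} [Fintype m] [DecidableEq m]

lemma psqrt_psd {A : Matrix m m ℝ} (hA : A.PosSemidef) : (psqrt A).PosSemidef := by
  unfold psqrt
  rw [dif_pos hA]
  have hd : (diagonal (Real.sqrt ∘ hA.1.eigenvalues)).PosSemidef :=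
    Matrix.posSemidef_diagonal_iff.mpr fun i => Real.sqrt_nonneg _
  have := hd.mul_mul_conjTranspose_same (hA.1.eigenvectorUnitary : Matrix m m ℝ)
  rwa [← Matrix.star_eq_conjTranspose] at this

lemma psqrt_mul_self {A : Matrix m m ℝ} (hA : A.PosSemidef) : psqrt A * psqrt A = A := by
  set U : Matrix m m ℝ := (hA.1.eigenvectorUnitary : Matrix m m ℝ) with hU
  have hspec : A = U * diagonal hA.1.eigenvalues * star U := by
    have := hA.1.spectral_theorem
    simpa [RCLike.ofReal_real_eq_id] using this
  have hu : star U * U = 1 := Unitary.coe_star_mul_self _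
  have hps : psqrt A = U * diagonal (Real.sqrt ∘ hA.1.eigenvalues) * star U := by
    unfold psqrt
    rw [dif_pos hA]
  rw [hps]
  conv_rhs => rw [hspec]
  rw [show U * diagonal (Real.sqrt ∘ hA.1.eigenvalues) * star U
      * (U * diagonal (Real.sqrt ∘ hA.1.eigenvalues) * star U)
      = U * (diagonal (Real.sqrt ∘ hA.1.eigenvalues) * (star U * U)
        * diagonal (Real.sqrt ∘ hA.1.eigenvalues)) * star U by simp only [Matrix.mul_assoc],
    hu, Matrix.mul_one, diagonal_mul_diagonal]
  have hd : (fun i => (Real.sqrt ∘ hA.1.eigenvalues) i * (Real.sqrt ∘ hA.1.eigenvalues) i)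
      = hA.1.eigenvalues := funext fun i => Real.mul_self_sqrt (hA.eigenvalues_nonneg i)
  rw [hd]

lemma psd_diag_nonneg {A : Matrix m m ℝ} (hA : A.PosSemidef) (i : m) : 0 ≤ A i i := by
  exact hA.diag_nonneg

lemma psd_trace_nonneg {A : Matrix m m ℝ} (hA : A.PosSemidef) : 0 ≤ A.trace := by
  simpa [Matrix.trace] using Finset.sum_nonneg fun i _ => psd_diag_nonneg hA i

lemma trace_mul_psd_nonneg {A B : Matrix m m ℝ} (hA : A.PosSemidef) (hB : B.PosSemidef) :
    0 ≤ (A * B).trace := by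
  set S := psqrt B with hSdef
  have hS : S.PosSemidef := psqrt_psd hB
  have hSS : S * S = B := psqrt_mul_self hB
  have h1 : (Sᴴ * A * S).PosSemidef := hA.conjTranspose_mul_mul_same S
  have h2 : (A * B).trace = (Sᴴ * A * S).trace := by
    rw [hS.1]
    rw [← hSS, ← Matrix.mul_assoc, Matrix.trace_mul_cycle]
  rw [h2]
  exact psd_trace_nonneg h1

lemma eigenvalues_le_one {V : Matrix m m ℝ} (hV : V.PosSemidef)
    (h1V : (1 - V).PosSemidef) (i : m) : hV.1.eigenvalues i ≤ 1 := by
  set U : Matrix m m ℝ := (hV.1.eigenvectorUnitary : Matrix m m ℝ) with hU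
  have hsU : star U * U = 1 := hV.1.eigenvectorUnitary.prop.1
  have key : star U * V * U = Matrix.diagonal hV.1.eigenvalues := by
    have := hV.1.conjStarAlgAut_star_eigenvectorUnitary
    simpa [RCLike.ofReal_real_eq_id] using this
  have h2 : (Uᴴ * (1 - V) * U).PosSemidef := h1V.conjTranspose_mul_mul_same U
  have h3 : Uᴴ * (1 - V) * U = Matrix.diagonal (fun j => 1 - hV.1.eigenvalues j) := by
    rw [← Matrix.star_eq_conjTranspose, Matrix.mul_sub, Matrix.mul_one, Matrix.sub_mul,
      hsU, key]
    ext j k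
    by_cases h : j = k <;> simp [Matrix.diagonal_apply, Matrix.one_apply, h]
  rw [h3] at h2
  have := Matrix.posSemidef_diagonal_iff.mp h2 i
  linarith

lemma sqrt_sub_self_psd {V : Matrix m m ℝ} (hV : V.PosSemidef)
    (h1V : (1 - V).PosSemidef) : (psqrt V - V).PosSemidef := by
  set U : Matrix m m ℝ := (hV.1.eigenvectorUnitary : Matrix m m ℝ) with hU
  set e := hV.1.eigenvalues with he
  have hsqrt : psqrt V = U * Matrix.diagonal (fun i => Real.sqrt (e i)) * star U := by
    rw [psqrt, dif_pos hV]
    rfl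
  have hspec : V = U * Matrix.diagonal e * star U := by
    have := hV.1.spectral_theorem
    simpa [RCLike.ofReal_real_eq_id] using this
  have hdiff : psqrt V - V = U * Matrix.diagonal (fun i => Real.sqrt (e i) - e i) * star U := by
    rw [hsqrt]
    conv_lhs => rw [hspec]
    rw [← Matrix.sub_mul, ← Matrix.mul_sub, Matrix.diagonal_sub]
  rw [hdiff]
  have hd : (Matrix.diagonal (fun i => Real.sqrt (e i) - e i)).PosSemidef := by
    refine Matrix.posSemidef_diagonal_iff.mpr fun i => ?_
    have h0 : 0 ≤ e i := hV.eigenvalues_nonneg i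
    have h1 : e i ≤ 1 := eigenvalues_le_one hV h1V i
    have : e i ≤ Real.sqrt (e i) := by
      nlinarith [Real.sq_sqrt h0, Real.sqrt_nonneg (e i)]
    linarith
  have := hd.mul_mul_conjTranspose_same U
  rwa [← Matrix.star_eq_conjTranspose] at this

lemma core_trace_ineq {S W : Matrix m m ℝ} (hS : S.PosSemidef) (hW : W.PosSemidef)
    (hdiff : (S - S * S).PosSemidef) :
    ((S * W * S) * (S * W * S)).trace ≤ (W * (S * W * S)).trace := by
  have hSsym : Sᴴ = S := hS.1
  have hWsym : Wᴴ = W := hW.1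
  have hSSpsd : (S * S).PosSemidef := by
    have := Matrix.posSemidef_conjTranspose_mul_self S
    rwa [hSsym] at this
  have psd1 : (W * (S * S) * W).PosSemidef := by
    have := hSSpsd.conjTranspose_mul_mul_same W
    rwa [hWsym] at this
  have psd2 : (W * (S - S * S) * W).PosSemidef := by
    have := hdiff.conjTranspose_mul_mul_same W
    rwa [hWsym] at this
  have h1 : 0 ≤ ((W * (S * S) * W) * (S - S * S)).trace :=
    trace_mul_psd_nonneg psd1 hdiff
  have h2 : 0 ≤ ((W * (S - S * S) * W) * S).trace :=
    trace_mul_psd_nonneg psd2 hS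
  have cyc : ((S * W * S) * (S * W * S)).trace = (W * (S * S) * W * (S * S)).trace := by
    rw [show (S * W * S) * (S * W * S) = S * (W * (S * S) * W * S) by noncomm_ring,
      Matrix.trace_mul_comm]
    congr 1
    noncomm_ring
  have e1 : ((W * (S * S) * W) * (S - S * S)).trace
      = (W * (S * S) * W * S).trace - (W * (S * S) * W * (S * S)).trace := by
    rw [Matrix.mul_sub, Matrix.trace_sub]
  have e2 : ((W * (S - S * S) * W) * S).trace
      = (W * S * W * S).trace - (W * (S * S) * W * S).trace := by
    rw [show (W * (S - S * S) * W) * S = W * S * W * S - W * (S * S) * W * S by noncomm_ring,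
      Matrix.trace_sub]
  have e3 : (W * (S * W * S)).trace = (W * S * W * S).trace := by
    congr 1
    noncomm_ring
  rw [cyc, e3]
  linarith

lemma norm2_nonneg (A : Matrix m m ℝ) : 0 ≤ norm2 A := by
  unfold norm2
  split
  · exact Real.sSup_nonneg (by rintro x ⟨i, rfl⟩; positivity)
  · exact le_refl 0

end Helpers

section MipHelpers

lemma mip_add_left {m k : Type*} [Fintype m] [Fintype k] (A B C : Matrix m k ℝ) :
    mip (A + B) C = mip A C + mip B C := by
  simp [mip, Matrix.transpose_add, Matrix.add_mul]

lemma mip_add_right {m k : Type*} [Fintype m] [Fintype k] (A B C : Matrix m k ℝ) :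
    mip A (B + C) = mip A B + mip A C := by
  simp [mip, Matrix.mul_add]

lemma mip_self_nonneg {m k : Type*} [Fintype m] [Fintype k] (A : Matrix m k ℝ) :
    0 ≤ mip A A := by
  have : mip A A = ∑ j, ∑ i, (A i j) ^ 2 := by
    simp [mip, Matrix.trace, Matrix.diag, Matrix.mul_apply, sq]
  rw [this]
  positivity

lemma mip_smul_self {m k : Type*} [Fintype m] [Fintype k] (c : ℝ) (B : Matrix m k ℝ) :
    mip (c • B) (c • B) = c ^ 2 * mip B B := by
  simp [mip, Matrix.transpose_smul, Matrix.smul_mul, Matrix.mul_smul, Matrix.trace_smul,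
    smul_eq_mul]
  ring

lemma mip_conj {n a b c d : ℕ} (P : Matrix (Fin n) (Fin a) ℝ) (Q : Matrix (Fin n) (Fin b) ℝ)
    (R : Matrix (Fin n) (Fin c) ℝ) (S : Matrix (Fin n) (Fin d) ℝ)
    (A : Matrix (Fin a) (Fin b) ℝ) (B : Matrix (Fin c) (Fin d) ℝ) :
    mip (P * A * Qᵀ) (R * B * Sᵀ) = ((Pᵀ * R) * B * ((Sᵀ * Q) * Aᵀ)).trace := by
  unfold mip
  simp only [Matrix.transpose_mul, Matrix.transpose_transpose, Matrix.mul_assoc]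
  rw [Matrix.trace_mul_comm Q]
  simp only [Matrix.mul_assoc]
  rw [Matrix.trace_mul_comm Aᵀ]
  simp only [Matrix.mul_assoc]

lemma mip_blocks {n p q : ℕ} (Pp : Matrix (Fin n) (Fin p) ℝ) (Pm : Matrix (Fin n) (Fin q) ℝ)
    (h1 : Ppᵀ * Pp = 1) (h2 : Pmᵀ * Pm = 1) (h3 : Ppᵀ * Pm = 0) (h4 : Pmᵀ * Pp = 0)
    (A1 B1 : Matrix (Fin p) (Fin p) ℝ) (A2 B2 : Matrix (Fin p) (Fin q) ℝ)
    (A3 B3 : Matrix (Fin q) (Fin p) ℝ) (A4 B4 : Matrix (Fin q) (Fin q) ℝ) :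
    mip (Pp * A1 * Ppᵀ + Pp * A2 * Pmᵀ + Pm * A3 * Ppᵀ + Pm * A4 * Pmᵀ)
        (Pp * B1 * Ppᵀ + Pp * B2 * Pmᵀ + Pm * B3 * Ppᵀ + Pm * B4 * Pmᵀ)
      = mip A1 B1 + mip A2 B2 + mip A3 B3 + mip A4 B4 := by
  simp only [mip_add_left, mip_add_right, mip_conj, h1, h2, h3, h4,
    Matrix.zero_mul, Matrix.mul_zero, Matrix.trace_zero, Matrix.one_mul, Matrix.mul_one,
    zero_add, add_zero]
  simp only [mip]
  rw [Matrix.trace_mul_comm B1, Matrix.trace_mul_comm B2, Matrix.trace_mul_comm B3,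
    Matrix.trace_mul_comm B4]

lemma mip_le_card {p q : ℕ} (B : Matrix (Fin p) (Fin q) ℝ) (h : ∀ i j, B i j ^ 2 ≤ 1) :
    mip B B ≤ (p : ℝ) * q := by
  have e : mip B B = ∑ j, ∑ i, (B i j) ^ 2 := by
    simp [mip, Matrix.trace, Matrix.diag, Matrix.mul_apply, sq]
  rw [e]
  calc (∑ j : Fin q, ∑ i : Fin p, (B i j) ^ 2) ≤ ∑ _j : Fin q, (p : ℝ) := by
        refine Finset.sum_le_sum fun j _ => ?_
        calc (∑ i : Fin p, (B i j) ^ 2) ≤ ∑ _i : Fin p, (1 : ℝ) :=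
              Finset.sum_le_sum fun i _ => h i j
          _ = (p : ℝ) := by simp
    _ = (q : ℝ) * p := by simp
    _ = (p : ℝ) * q := by ring

end MipHelpers

section FeasHelpers

lemma entry_sq_le_one {n : ℕ} {X : Matrix (Fin n) (Fin n) ℝ} (hX : X ∈ Feas n)
    {p q : Fin n → ℝ} (hp : p ⬝ᵥ p = 1) (hq : q ⬝ᵥ q = 1) :
    (p ⬝ᵥ X *ᵥ q) ^ 2 ≤ 1 := by
  have quadX : ∀ x, 0 ≤ x ⬝ᵥ X *ᵥ x := fun x => by simpa using hX.1.dotProduct_mulVec_nonneg x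
  have quadI : ∀ x, 0 ≤ x ⬝ᵥ (1 - X) *ᵥ x := fun x => by simpa using hX.2.dotProduct_mulVec_nonneg x
  have hsym : Xᵀ = X := by
    have := hX.1.1
    rwa [← Matrix.conjTranspose_eq_transpose_of_trivial]
  have hcc : q ⬝ᵥ X *ᵥ p = p ⬝ᵥ X *ᵥ q := by
    conv_lhs => rw [← hsym]
    rw [Matrix.mulVec_transpose, dotProduct_comm, ← Matrix.dotProduct_mulVec]
  have h1 := quadX (p - q)
  have h2 := quadX (p + q)
  rw [Matrix.mulVec_sub] at h1
  rw [Matrix.mulVec_add] at h2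
  simp only [sub_dotProduct, dotProduct_sub, add_dotProduct,
    dotProduct_add] at h1 h2
  have hap : p ⬝ᵥ X *ᵥ p ≤ 1 := by
    have := quadI p
    rw [Matrix.sub_mulVec, Matrix.one_mulVec, dotProduct_sub, hp] at this
    linarith
  have haq : q ⬝ᵥ X *ᵥ q ≤ 1 := by
    have := quadI q
    rw [Matrix.sub_mulVec, Matrix.one_mulVec, dotProduct_sub, hq] at this
    linarith
  rw [hcc] at h1 h2
  nlinarith [h1, h2, hap, haq]

lemma entry_eq {n a b : ℕ} (P : Matrix (Fin n) (Fin a) ℝ) (X : Matrix (Fin n) (Fin n) ℝ)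
    (Q : Matrix (Fin n) (Fin b) ℝ) (i : Fin a) (j : Fin b) :
    (Pᵀ * X * Q) i j = (fun k => P k i) ⬝ᵥ X *ᵥ (fun k => Q k j) := by
  simp only [Matrix.mul_apply, Matrix.mulVec, dotProduct, Matrix.transpose_apply,
    Finset.sum_mul, Finset.mul_sum]
  rw [Finset.sum_comm]
  exact Finset.sum_congr rfl fun l _ => Finset.sum_congr rfl fun k _ => by ring

lemma col_unit {n p : ℕ} (P : Matrix (Fin n) (Fin p) ℝ) (hP : Pᵀ * P = 1) (i : Fin p) :
    (fun k => P k i) ⬝ᵥ (fun k => P k i) = 1 := by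
  have := congrFun (congrFun hP i) i
  simpa [Matrix.mul_apply, dotProduct, Matrix.one_apply] using this

lemma conj_psd {n p : ℕ} (P : Matrix (Fin n) (Fin p) ℝ) {Y : Matrix (Fin n) (Fin n) ℝ}
    (hY : Y.PosSemidef) : (Pᵀ * Y * P).PosSemidef := by
  have := hY.conjTranspose_mul_mul_same P
  rwa [Matrix.conjTranspose_eq_transpose_of_trivial] at this

lemma one_sub_conj {n p : ℕ} (P : Matrix (Fin n) (Fin p) ℝ) (hP : Pᵀ * P = 1)
    (Y : Matrix (Fin n) (Fin n) ℝ) : 1 - Pᵀ * Y * P = Pᵀ * (1 - Y) * P := by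
  rw [Matrix.mul_sub, Matrix.mul_one, Matrix.sub_mul, hP]

lemma psqrt_facts {p : ℕ} {V : Matrix (Fin p) (Fin p) ℝ} (hV : V.PosSemidef)
    (h1V : (1 - V).PosSemidef) :
    (psqrt V).PosSemidef ∧ (psqrt V - psqrt V * psqrt V).PosSemidef := by
  refine ⟨psqrt_psd hV, ?_⟩
  rw [psqrt_mul_self hV]
  exact sqrt_sub_self_psd hV h1V

end FeasHelpers

lemma main_aux {n np nm : ℕ} (hdim : np + nm = n)
    (Pp : Matrix (Fin n) (Fin np) ℝ) (Pm : Matrix (Fin n) (Fin nm) ℝ)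
    (h1 : Ppᵀ * Pp = 1) (h2 : Pmᵀ * Pm = 1) (h3 : Ppᵀ * Pm = 0) (h4 : Pmᵀ * Pp = 0)
    {Gp : Matrix (Fin np) (Fin np) ℝ} {Gm : Matrix (Fin nm) (Fin nm) ℝ}
    (hGp : Gp.PosSemidef) (hGm : (-Gm).PosSemidef)
    (hGpT : Gpᵀ = Gp) (hGmT : Gmᵀ = Gm)
    {Sp : Matrix (Fin np) (Fin np) ℝ} {Sm : Matrix (Fin nm) (Fin nm) ℝ}
    (hSp : Sp.PosSemidef) (hSpd : (Sp - Sp * Sp).PosSemidef)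
    (hSm : Sm.PosSemidef) (hSmd : (Sm - Sm * Sm).PosSemidef)
    (B2 : Matrix (Fin np) (Fin nm) ℝ) (B3 : Matrix (Fin nm) (Fin np) ℝ)
    (hB2 : ∀ i j, B2 i j ^ 2 ≤ 1) (hB3 : ∀ i j, B3 i j ^ 2 ≤ 1)
    {γ M₁ : ℝ} (hγ0 : 0 ≤ γ) (hγM : γ ≤ M₁)
    {G : Matrix (Fin n) (Fin n) ℝ}
    (hG : G = Pp * Gp * Ppᵀ + Pm * Gm * Pmᵀ) :
    mip (Pp * (Sp * Gp * Sp) * Ppᵀ + γ • (Pp * B2 * Pmᵀ) + γ • (Pm * B3 * Ppᵀ)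
          + Pm * (Sm * Gm * Sm) * Pmᵀ)
        (Pp * (Sp * Gp * Sp) * Ppᵀ + γ • (Pp * B2 * Pmᵀ) + γ • (Pm * B3 * Ppᵀ)
          + Pm * (Sm * Gm * Sm) * Pmᵀ)
      ≤ mip G (Pp * (Sp * Gp * Sp) * Ppᵀ + γ • (Pp * B2 * Pmᵀ) + γ • (Pm * B3 * Ppᵀ)
          + Pm * (Sm * Gm * Sm) * Pmᵀ) + 1 / 2 * M₁ ^ 2 * (n : ℝ) ^ 3 := by
  have e : Pp * (Sp * Gp * Sp) * Ppᵀ + γ • (Pp * B2 * Pmᵀ) + γ • (Pm * B3 * Ppᵀ)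
          + Pm * (Sm * Gm * Sm) * Pmᵀ
      = Pp * (Sp * Gp * Sp) * Ppᵀ + Pp * (γ • B2) * Pmᵀ + Pm * (γ • B3) * Ppᵀ
          + Pm * (Sm * Gm * Sm) * Pmᵀ := by
    simp only [Matrix.smul_mul, Matrix.mul_smul]
  have hG4 : G = Pp * Gp * Ppᵀ + Pp * (0 : Matrix (Fin np) (Fin nm) ℝ) * Pmᵀ
      + Pm * (0 : Matrix (Fin nm) (Fin np) ℝ) * Ppᵀ + Pm * Gm * Pmᵀ := by
    rw [hG]; simp
  rw [e, hG4, mip_blocks Pp Pm h1 h2 h3 h4, mip_blocks Pp Pm h1 h2 h3 h4,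
    mip_smul_self, mip_smul_self]
  have hz2 : mip (0 : Matrix (Fin np) (Fin nm) ℝ) (γ • B2) = 0 := by simp [mip]
  have hz3 : mip (0 : Matrix (Fin nm) (Fin np) ℝ) (γ • B3) = 0 := by simp [mip]
  rw [hz2, hz3]
  have hSpT : Spᵀ = Sp := by
    have := hSp.1
    rwa [← Matrix.conjTranspose_eq_transpose_of_trivial]
  have hSmT : Smᵀ = Sm := by
    have := hSm.1
    rwa [← Matrix.conjTranspose_eq_transpose_of_trivial]
  have hA1T : (Sp * Gp * Sp)ᵀ = Sp * Gp * Sp := by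
    simp [Matrix.transpose_mul, hSpT, hGpT, Matrix.mul_assoc]
  have hA4T : (Sm * Gm * Sm)ᵀ = Sm * Gm * Sm := by
    simp [Matrix.transpose_mul, hSmT, hGmT, Matrix.mul_assoc]
  have hpos : mip (Sp * Gp * Sp) (Sp * Gp * Sp) ≤ mip Gp (Sp * Gp * Sp) := by
    have core := core_trace_ineq hSp hGp hSpd
    unfold mip
    rw [hA1T, hGpT]
    exact core
  have hneg : mip (Sm * Gm * Sm) (Sm * Gm * Sm) ≤ mip Gm (Sm * Gm * Sm) := by
    have core := core_trace_ineq hSm hGm hSmd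
    simp only [Matrix.neg_mul, Matrix.mul_neg, neg_neg, Matrix.trace_neg] at core
    unfold mip
    rw [hA4T, hGmT]
    exact core
  have hb2 : mip B2 B2 ≤ (np : ℝ) * nm := mip_le_card B2 hB2
  have hb3 : mip B3 B3 ≤ (nm : ℝ) * np := mip_le_card B3 hB3
  have hb2' : 0 ≤ mip B2 B2 := mip_self_nonneg _
  have hb3' : 0 ≤ mip B3 B3 := mip_self_nonneg _
  have hγ2 : γ ^ 2 ≤ M₁ ^ 2 := by nlinarith
  have hM2 : (0 : ℝ) ≤ M₁ ^ 2 := sq_nonneg M₁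
  have hγ2' : (0 : ℝ) ≤ γ ^ 2 := sq_nonneg γ
  have hc2 : γ ^ 2 * mip B2 B2 ≤ M₁ ^ 2 * ((np : ℝ) * nm) := mul_le_mul hγ2 hb2 hb2' hM2
  have hc3 : γ ^ 2 * mip B3 B3 ≤ M₁ ^ 2 * ((nm : ℝ) * np) := mul_le_mul hγ2 hb3 hb3' hM2
  have hd : (np : ℝ) + nm = n := by exact_mod_cast hdim
  have hs : (np : ℝ) * nm + (nm : ℝ) * np ≤ 1 / 2 * (n : ℝ) ^ 3 := by
    rcases Nat.eq_zero_or_pos n with h0 | hposn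
    · have hnp : np = 0 := by omega
      have hnm : nm = 0 := by omega
      simp [hnp, hnm]
    · have h1' : (1 : ℝ) ≤ n := by exact_mod_cast hposn
      have hn0 : (0 : ℝ) ≤ n := by linarith
      have hd2 : (n : ℝ) ^ 2 = ((np : ℝ) + nm) ^ 2 := by rw [hd]
      nlinarith [sq_nonneg ((np : ℝ) - nm),
        mul_nonneg (mul_nonneg hn0 hn0) (by linarith : (0 : ℝ) ≤ (n : ℝ) - 1)]
  have hnn : M₁ ^ 2 * ((np : ℝ) * nm) + M₁ ^ 2 * ((nm : ℝ) * np)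
      ≤ 1 / 2 * M₁ ^ 2 * (n : ℝ) ^ 3 := by
    calc M₁ ^ 2 * ((np : ℝ) * nm) + M₁ ^ 2 * ((nm : ℝ) * np)
        = M₁ ^ 2 * ((np : ℝ) * nm + (nm : ℝ) * np) := by ring
      _ ≤ M₁ ^ 2 * (1 / 2 * (n : ℝ) ^ 3) := mul_le_mul_of_nonneg_left hs hM2
      _ = 1 / 2 * M₁ ^ 2 * (n : ℝ) ^ 3 := by ring
  linarith

theorem fnorm_Dmat_sq_le {n : ℕ}
    (f : Matrix (Fin n) (Fin n) ℝ → ℝ)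
    (grad : Matrix (Fin n) (Fin n) ℝ → Matrix (Fin n) (Fin n) ℝ)
    (hgradsym : ∀ X ∈ Feas n, (grad X).IsSymm)
    (hgrad : ∀ X ∈ Feas n, HasFDerivAt f (gradCLM (grad X)) X)
    (M₁ : ℝ)
    (hM1 : IsGreatest {r : ℝ | ∃ X ∈ Feas n, r = norm2 (grad X)} M₁)
    (X : Matrix (Fin n) (Fin n) ℝ) (hX : X ∈ Feas n)
    (sd : SpecDecomp n (grad X)) :
    fnorm (sd.Dmat X) ^ 2 ≤ sd.Nval X + (1 / 2) * M₁ ^ 2 * (n : ℝ) ^ 3 := by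
  have hγ0 : 0 ≤ norm2 (grad X) := norm2_nonneg _
  have hγM : norm2 (grad X) ≤ M₁ := hM1.2 ⟨X, hX, rfl⟩
  have h4 : sd.Pmᵀ * sd.Pp = 0 := by
    have := congrArg Matrix.transpose sd.hPpPm
    simpa using this
  have hVp : (sd.Ppᵀ * X * sd.Pp).PosSemidef := conj_psd sd.Pp hX.1
  have h1Vp : (1 - sd.Ppᵀ * X * sd.Pp).PosSemidef := by
    rw [one_sub_conj sd.Pp sd.hPp_orth]
    exact conj_psd sd.Pp hX.2
  have hVm : (sd.Pmᵀ * (1 - X) * sd.Pm).PosSemidef := conj_psd sd.Pm hX.2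
  have h1Vm : (1 - sd.Pmᵀ * (1 - X) * sd.Pm).PosSemidef := by
    rw [one_sub_conj sd.Pm sd.hPm_orth, sub_sub_cancel]
    exact conj_psd sd.Pm hX.1
  obtain ⟨hSp, hSpd⟩ := psqrt_facts hVp h1Vp
  obtain ⟨hSm, hSmd⟩ := psqrt_facts hVm h1Vm
  have hGp : (Matrix.diagonal sd.gp).PosSemidef :=
    Matrix.posSemidef_diagonal_iff.mpr fun i => (sd.hgp_pos i).le
  have hGm : (-(Matrix.diagonal sd.gm)).PosSemidef := by
    rw [Matrix.diagonal_neg]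
    exact Matrix.posSemidef_diagonal_iff.mpr fun j => by
      have := sd.hgm_nonpos j
      simpa using neg_nonneg.mpr this
  have hB2 : ∀ i j, (sd.Ppᵀ * X * sd.Pm) i j ^ 2 ≤ 1 := fun i j => by
    rw [entry_eq]
    exact entry_sq_le_one hX (col_unit sd.Pp sd.hPp_orth i) (col_unit sd.Pm sd.hPm_orth j)
  have hB3 : ∀ i j, (sd.Pmᵀ * X * sd.Pp) i j ^ 2 ≤ 1 := fun i j => by
    rw [entry_eq]
    exact entry_sq_le_one hX (col_unit sd.Pm sd.hPm_orth i) (col_unit sd.Pp sd.hPp_orth j)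
  have key := main_aux sd.hdim sd.Pp sd.Pm sd.hPp_orth sd.hPm_orth sd.hPpPm h4
    hGp hGm (Matrix.diagonal_transpose _) (Matrix.diagonal_transpose _)
    hSp hSpd hSm hSmd (sd.Ppᵀ * X * sd.Pm) (sd.Pmᵀ * X * sd.Pp) hB2 hB3
    hγ0 hγM sd.hG
  have hfn : fnorm (sd.Dmat X) ^ 2 = mip (sd.Dmat X) (sd.Dmat X) :=
    Real.sq_sqrt (mip_self_nonneg _)
  rw [hfn]
  exact key


end BoxSDP
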